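/- arXiv:2408.16403 — 2 statements merged into one kernel-verified Lean document; each statement's English description precedes it below -/
import Mathlib

section
/- Let T > 0 and C, L, M, C₀ ≥ 0 be constants. Let (x_i)_{i≥0} be a sequence of continuously differentiable functions x_i : [0,T] → ℝ with x_i(0) = 0 for all i, and let (τ_i)_{i≥0} be a sequence of nonnegative reals. Assume: (i) x₀'(t) ≤ C·x₀(t) + M·τ₀ for all t ∈ [0,T]; (ii) for every i ≥ 1 and t ∈ [0,T], x_i'(t) ≤ C·x_i(t) + (L/i)·∑_{j=0}^{i-1} x_j(t) + M·τ_i; (iii) for every i ≥ 1, (τ₀ + τ₁ + ⋯ + τ_{i-1})/i ≤ C₀·τ_i. Then there exists a constant C̄ ≥ 0, independent of i, such that x_i(t) ≤ C̄·τ_i for all i ≥ 0 and all t ∈ [0,T]. (Explicitly, one may take C̄ = C₁·e^{C₂T} with C₂ = e^{CT}·L·C₀ and any C₁ > e^{CT}·M·T large enough that x₀(t) ≤ C₁·τ₀ on [0,T].) -/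
open Set Finset

/-- One-sided Grönwall: if `f' ≤ C f` on `[0,T]` and `f 0 ≤ 0` then `f ≤ 0` on `[0,T]`. -/
lemma onesided_gronwall_aux (T C : ℝ) (f f' : ℝ → ℝ)
    (hd : ∀ t ∈ Set.Icc (0 : ℝ) T, HasDerivAt f (f' t) t)
    (h0 : f 0 ≤ 0)
    (hle : ∀ t ∈ Set.Icc (0 : ℝ) T, f' t ≤ C * f t) :
    ∀ t ∈ Set.Icc (0 : ℝ) T, f t ≤ 0 := by
  rcases le_or_gt T 0 with hT | hT
  · intro t ht
    have : t = 0 := le_antisymm (ht.2.trans hT) ht.1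
    simpa [this] using h0
  set v : ℝ → ℝ := fun t => f t * Real.exp (-C * t) with hv
  have hvd : ∀ t ∈ Set.Icc (0 : ℝ) T,
      HasDerivAt v ((f' t - C * f t) * Real.exp (-C * t)) t := by
    intro t ht
    have hlin : HasDerivAt (fun s : ℝ => -C * s) (-C) t := by
      simpa using (hasDerivAt_id t).const_mul (-C)
    have he : HasDerivAt (fun s : ℝ => Real.exp (-C * s))
        (Real.exp (-C * t) * (-C)) t := hlin.exp
    have : HasDerivAt (fun s => f s * Real.exp (-C * s))
        (f' t * Real.exp (-C * t) + f t * (Real.exp (-C * t) * (-C))) t := (hd t ht).mul he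
    convert this using 1
    ring
  have hvcont : ContinuousOn v (Set.Icc (0 : ℝ) T) := fun t ht =>
    ((hvd t ht).continuousAt).continuousWithinAt
  have hanti : AntitoneOn v (Set.Icc (0 : ℝ) T) := by
    apply antitoneOn_of_deriv_nonpos (convex_Icc 0 T) hvcont
    · intro t ht
      rw [interior_Icc] at ht
      exact ((hvd t (Set.mem_Icc_of_Ioo ht)).differentiableAt).differentiableWithinAt
    · intro t ht
      rw [interior_Icc] at ht
      rw [(hvd t (Set.mem_Icc_of_Ioo ht)).deriv]
      have h1 : f' t - C * f t ≤ 0 := sub_nonpos.2 (hle t (Set.mem_Icc_of_Ioo ht))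
      exact mul_nonpos_of_nonpos_of_nonneg h1 (Real.exp_pos _).le
  intro t ht
  have h0mem : (0 : ℝ) ∈ Set.Icc (0 : ℝ) T := ⟨le_refl _, hT.le⟩
  have := hanti h0mem ht ht.1
  have hv0 : v 0 = f 0 := by simp [hv]
  have hvt : f t * Real.exp (-C * t) ≤ 0 := by
    rw [hv0] at this; exact this.trans h0
  have hep : 0 < Real.exp (-C * t) := Real.exp_pos _
  nlinarith [hvt, hep]

/-- Recursive Grönwall-type lemma: if each `x i` grows at most linearly in itself plus
the average of the previous `x j`'s plus `M * τ i`, and the `τ i` satisfy an averaging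
condition, then `x i t ≤ C̄ * τ i` uniformly. -/
theorem recursive_gronwall
    (T C L M C₀ : ℝ) (hT : 0 < T) (hC : 0 ≤ C) (hL : 0 ≤ L) (hM : 0 ≤ M) (hC₀ : 0 ≤ C₀)
    (x x' : ℕ → ℝ → ℝ) (τ : ℕ → ℝ)
    (hderiv : ∀ i, ∀ t ∈ Set.Icc (0 : ℝ) T, HasDerivAt (x i) (x' i t) t)
    (hcont : ∀ i, ContinuousOn (x' i) (Set.Icc (0 : ℝ) T))
    (hx0 : ∀ i, x i 0 = 0)
    (hτ : ∀ i, 0 ≤ τ i)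
    (h0 : ∀ t ∈ Set.Icc (0 : ℝ) T, x' 0 t ≤ C * x 0 t + M * τ 0)
    (hrec : ∀ i : ℕ, 1 ≤ i → ∀ t ∈ Set.Icc (0 : ℝ) T,
      x' i t ≤ C * x i t + (L / (i : ℝ)) * (∑ j ∈ Finset.range i, x j t) + M * τ i)
    (havg : ∀ i : ℕ, 1 ≤ i → (∑ j ∈ Finset.range i, τ j) / (i : ℝ) ≤ C₀ * τ i) :
    ∃ Cbar : ℝ, 0 ≤ Cbar ∧ ∀ i : ℕ, ∀ t ∈ Set.Icc (0 : ℝ) T, x i t ≤ Cbar * τ i := by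
  set C₂ : ℝ := C + L * C₀ + 1 with hC₂
  have hC₂pos : 0 < C₂ := by positivity
  -- key claim by strong induction
  have key : ∀ i : ℕ, ∀ t ∈ Set.Icc (0 : ℝ) T, x i t ≤ M * Real.exp (C₂ * t) * τ i := by
    intro i
    induction i using Nat.strong_induction_on with
    | _ i IH =>
      -- apply the one-sided Grönwall lemma to f t = x i t - M exp(C₂ t) τ i
      have main := onesided_gronwall_aux T C
        (fun t => x i t - M * Real.exp (C₂ * t) * τ i)
        (fun t => x' i t - M * (Real.exp (C₂ * t) * C₂) * τ i)
        (by
          intro t ht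
          have hlin : HasDerivAt (fun s : ℝ => C₂ * s) C₂ t := by
            simpa using (hasDerivAt_id t).const_mul C₂
          have he : HasDerivAt (fun s : ℝ => Real.exp (C₂ * s))
              (Real.exp (C₂ * t) * C₂) t := hlin.exp
          exact (hderiv i t ht).sub (((he.const_mul M).mul_const (τ i)))
        )
        (by
          have : x i 0 = 0 := hx0 i
          simp only [this, mul_zero, Real.exp_zero]
          nlinarith [hτ i])
        (by
          intro t ht
          show x' i t - M * (Real.exp (C₂ * t) * C₂) * τ i
            ≤ C * (x i t - M * Real.exp (C₂ * t) * τ i)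
          have ht0 : (0:ℝ) ≤ t := ht.1
          have hepos : (0:ℝ) < Real.exp (C₂ * t) := Real.exp_pos _
          have hexp1 : (1 : ℝ) ≤ Real.exp (C₂ * t) :=
            Real.one_le_exp (mul_nonneg hC₂pos.le ht0)
          rcases Nat.eq_zero_or_pos i with hi | hi
          · subst hi
            have hh := h0 t ht
            set E := Real.exp (C₂ * t) with hE
            rw [hC₂]
            nlinarith [hh, mul_nonneg (mul_nonneg hM (hτ 0)) (sub_nonneg.2 hexp1),
              mul_nonneg (mul_nonneg (mul_nonneg hL hC₀)
                (mul_nonneg hM hepos.le)) (hτ 0)]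
          · have hi1 : 1 ≤ i := hi
            have hirec := hrec i hi1 t ht
            have hipos : (0:ℝ) < (i:ℝ) := by exact_mod_cast hi
            have hMe : 0 ≤ M * Real.exp (C₂ * t) := mul_nonneg hM hepos.le
            have hS : ∑ j ∈ Finset.range i, x j t
                ≤ M * Real.exp (C₂ * t) * ∑ j ∈ Finset.range i, τ j := by
              rw [Finset.mul_sum]
              exact Finset.sum_le_sum fun j hj => IH j (Finset.mem_range.mp hj) t ht
            have hsumτ : ∑ j ∈ Finset.range i, τ j ≤ C₀ * τ i * i := by
              have hv := havg i hi1
              rw [div_le_iff₀ hipos] at hv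
              linarith
            have hS2 : ∑ j ∈ Finset.range i, x j t
                ≤ M * Real.exp (C₂ * t) * (C₀ * τ i * i) :=
              hS.trans (mul_le_mul_of_nonneg_left hsumτ hMe)
            have hLi : 0 ≤ L / (i:ℝ) := by positivity
            have h3 : (L / (i:ℝ)) * (∑ j ∈ Finset.range i, x j t)
                ≤ L * C₀ * M * Real.exp (C₂ * t) * τ i := by
              calc (L / (i:ℝ)) * ∑ j ∈ Finset.range i, x j t
                  ≤ (L / (i:ℝ)) * (M * Real.exp (C₂ * t) * (C₀ * τ i * i)) :=
                    mul_le_mul_of_nonneg_left hS2 hLi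
                _ = L * C₀ * M * Real.exp (C₂ * t) * τ i := by
                    field_simp
            set E := Real.exp (C₂ * t) with hE
            rw [hC₂]
            nlinarith [hirec, h3,
              mul_nonneg (mul_nonneg hM (hτ i)) (sub_nonneg.2 hexp1)])
      intro t ht
      have h' : x i t - M * Real.exp (C₂ * t) * τ i ≤ 0 := main t ht
      linarith
  refine ⟨M * Real.exp (C₂ * T), by positivity, ?_⟩
  intro i t ht
  have h1 := key i t ht
  have h2 : Real.exp (C₂ * t) ≤ Real.exp (C₂ * T) :=
    Real.exp_le_exp.2 (mul_le_mul_of_nonneg_left ht.2 hC₂pos.le)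
  nlinarith [h1, mul_nonneg (mul_nonneg hM (hτ i)) (sub_nonneg.2 h2)]
end

section
/- Let T > 0 and A ≥ 0. Let u, w : [0,T] → [0,∞) be measurable, integrable nonnegative functions such that for every t ∈ [0,T], u(t) ≤ A·(∫₀^t u(s) ds + ∫₀^t w(s) ds). Then for every α > A, ∫₀^T e^{-α·t} u(t) dt ≤ (A/(α - A)) · ∫₀^T e^{-α·t} w(t) dt. -/
open MeasureTheory Set intervalIntegral

lemma exp_setInt_bound {α s T : ℝ} (hα : 0 < α) :
    ∫ t in Icc s T, Real.exp (-α * t) ≤ α⁻¹ * Real.exp (-α * s) := by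
  rcases le_or_gt s T with h | h
  · rw [integral_Icc_eq_integral_Ioc, ← intervalIntegral.integral_of_le h]
    have hderiv : ∀ t ∈ uIcc s T, HasDerivAt (fun t => -(α⁻¹) * Real.exp (-α * t))
        (Real.exp (-α * t)) t := by
      intro t _
      have h1 : HasDerivAt (fun t : ℝ => -α * t) (-α) t := by
        simpa using (hasDerivAt_id t).const_mul (-α)
      have h2 := (Real.hasDerivAt_exp (-α * t)).comp t h1
      have h3 := h2.const_mul (-(α⁻¹))
      convert h3 using 1
      · rfl
      · rfl
      · rfl
      have hα0 : α ≠ 0 := hα.ne'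
      field_simp
    have hint : IntervalIntegrable (fun t => Real.exp (-α * t)) volume s T :=
      ((Real.continuous_exp.comp (continuous_const.mul continuous_id))).intervalIntegrable s T
    rw [intervalIntegral.integral_eq_sub_of_hasDerivAt hderiv hint]
    have : (0:ℝ) ≤ α⁻¹ * Real.exp (-α * T) := by positivity
    linarith [this]
  · rw [Set.Icc_eq_empty (not_le.mpr h)]
    simp
    positivity

lemma exp_mul_integrableOn {α T : ℝ} (hα : 0 < α) {f : ℝ → ℝ}
    (hf : IntegrableOn f (Icc (0:ℝ) T)) :
    IntegrableOn (fun s => Real.exp (-α * s) * f s) (Icc (0:ℝ) T) := by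
  refine Integrable.bdd_mul (c := 1) hf
    ((Real.continuous_exp.comp (continuous_const.mul continuous_id)).aestronglyMeasurable) ?_
  rw [ae_restrict_iff' measurableSet_Icc]
  filter_upwards with x hx
  rw [Real.norm_eq_abs, Real.abs_exp, Real.exp_le_one_iff]
  nlinarith [hx.1]

lemma key_interchange {T α : ℝ} (hα : 0 < α) (f : ℝ → ℝ)
    (hf : IntegrableOn f (Icc (0:ℝ) T))
    (hf0 : ∀ t ∈ Icc (0:ℝ) T, 0 ≤ f t) :
    ∫ t in Icc (0:ℝ) T, Real.exp (-α * t) * ∫ s in (0:ℝ)..t, f s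
      ≤ α⁻¹ * ∫ s in Icc (0:ℝ) T, Real.exp (-α * s) * f s := by
  set μT := volume.restrict (Icc (0:ℝ) T) with hμT
  set g : ℝ × ℝ → ℝ := fun p => if p.2 ≤ p.1 then Real.exp (-α * p.1) * f p.2 else 0 with hg
  have hgm : AEStronglyMeasurable g (μT.prod μT) := by
    have h1 : AEStronglyMeasurable (fun p : ℝ × ℝ => Real.exp (-α * p.1) * f p.2) (μT.prod μT) :=
      ((Real.continuous_exp.comp (continuous_const.mul continuous_fst)).aestronglyMeasurable).mul
        hf.aestronglyMeasurable.comp_snd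
    have : g = Set.indicator {p : ℝ × ℝ | p.2 ≤ p.1}
        (fun p => Real.exp (-α * p.1) * f p.2) := by
      funext p; simp [hg, Set.indicator_apply, Set.mem_setOf_eq]
    rw [this]
    exact h1.indicator (measurableSet_le measurable_snd measurable_fst)
  have hexp_int : IntegrableOn (fun t : ℝ => Real.exp (-α * t)) (Icc (0:ℝ) T) :=
    (Real.continuous_exp.comp (continuous_const.mul continuous_id)).continuousOn.integrableOn_compact
      isCompact_Icc
  have hgi : Integrable g (μT.prod μT) := by
    refine Integrable.mono' (hexp_int.mul_prod hf.norm) hgm ?_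
    filter_upwards with p
    rcases le_or_gt p.2 p.1 with h | h
    · simp only [hg, if_pos h]
      rw [Real.norm_eq_abs, abs_mul, Real.abs_exp, Real.norm_eq_abs]
    · simp only [hg, if_neg (not_le.mpr h)]
      rw [norm_zero]
      positivity
  have hswap : ∫ t, (∫ s, g (t, s) ∂μT) ∂μT = ∫ s, (∫ t, g (t, s) ∂μT) ∂μT := by
    exact MeasureTheory.integral_integral_swap hgi
  -- identify LHS
  have hL : ∀ t ∈ Icc (0:ℝ) T,
      (∫ s, g (t, s) ∂μT) = Real.exp (-α * t) * ∫ s in (0:ℝ)..t, f s := by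
    intro t ht
    have h1 : (fun s => g (t, s)) = Set.indicator (Iic t) (fun s => Real.exp (-α * t) * f s) := by
      funext s; simp [hg, Set.indicator_apply, Set.mem_Iic]
    rw [h1, MeasureTheory.integral_indicator measurableSet_Iic, hμT,
      Measure.restrict_restrict measurableSet_Iic]
    have h2 : Iic t ∩ Icc (0:ℝ) T = Icc (0:ℝ) t := by
      ext s
      simp only [Set.mem_inter_iff, Set.mem_Iic, Set.mem_Icc]
      exact ⟨fun h => ⟨h.2.1, h.1⟩, fun h => ⟨h.2, h.1, h.2.trans ht.2⟩⟩
    rw [h2, MeasureTheory.integral_const_mul, integral_Icc_eq_integral_Ioc,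
      ← intervalIntegral.integral_of_le ht.1]
  -- identify/bound RHS inner integral
  have hR : ∀ s ∈ Icc (0:ℝ) T,
      (∫ t, g (t, s) ∂μT) ≤ α⁻¹ * (Real.exp (-α * s) * f s) := by
    intro s hs
    have h1 : (fun t => g (t, s)) = Set.indicator (Ici s) (fun t => Real.exp (-α * t) * f s) := by
      funext t; simp [hg, Set.indicator_apply, Set.mem_Ici]
    have h2 : Ici s ∩ Icc (0:ℝ) T = Icc s T := by
      ext t
      simp only [Set.mem_inter_iff, Set.mem_Ici, Set.mem_Icc]
      exact ⟨fun h => ⟨h.1, h.2.2⟩, fun h => ⟨h.1, hs.1.trans h.1, h.2⟩⟩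
    rw [h1, MeasureTheory.integral_indicator measurableSet_Ici, hμT,
      Measure.restrict_restrict measurableSet_Ici, h2, MeasureTheory.integral_mul_const]
    have h3 := exp_setInt_bound (s := s) (T := T) hα
    have := mul_le_mul_of_nonneg_right h3 (hf0 s hs)
    calc (∫ t in Icc s T, Real.exp (-α * t)) * f s
        ≤ (α⁻¹ * Real.exp (-α * s)) * f s := this
      _ = α⁻¹ * (Real.exp (-α * s) * f s) := by ring
  have heq : ∫ t in Icc (0:ℝ) T, Real.exp (-α * t) * ∫ s in (0:ℝ)..t, f s
      = ∫ s, (∫ t, g (t, s) ∂μT) ∂μT := by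
    rw [← hswap]
    exact MeasureTheory.setIntegral_congr_fun measurableSet_Icc (fun t ht => (hL t ht).symm)
  rw [heq]
  have hefint : IntegrableOn (fun s => Real.exp (-α * s) * f s) (Icc (0:ℝ) T) :=
    exp_mul_integrableOn hα hf
  calc ∫ s, (∫ t, g (t, s) ∂μT) ∂μT
      ≤ ∫ s in Icc (0:ℝ) T, α⁻¹ * (Real.exp (-α * s) * f s) := by
        refine MeasureTheory.setIntegral_mono_on ?_ ?_ measurableSet_Icc hR
        · exact hgi.integral_prod_right
        · exact hefint.const_mul _
    _ = α⁻¹ * ∫ s in Icc (0:ℝ) T, Real.exp (-α * s) * f s :=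
        MeasureTheory.integral_const_mul _ _

/-- Analytic core of the contraction estimate: if `u(t) ≤ A (∫₀^t u + ∫₀^t w)` on `[0,T]`
for nonnegative integrable `u, w`, then for any `α > A`,
`∫₀^T e^{-α t} u ≤ (A/(α-A)) ∫₀^T e^{-α t} w`. -/
theorem exp_weighted_contraction_bound
    (T A : ℝ) (hT : 0 < T) (hA : 0 ≤ A)
    (u w : ℝ → ℝ)
    (hu_nonneg : ∀ t ∈ Set.Icc (0 : ℝ) T, 0 ≤ u t)
    (hw_nonneg : ∀ t ∈ Set.Icc (0 : ℝ) T, 0 ≤ w t)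
    (hu_int : MeasureTheory.IntegrableOn u (Set.Icc (0 : ℝ) T))
    (hw_int : MeasureTheory.IntegrableOn w (Set.Icc (0 : ℝ) T))
    (hineq : ∀ t ∈ Set.Icc (0 : ℝ) T,
      u t ≤ A * ((∫ s in (0 : ℝ)..t, u s) + ∫ s in (0 : ℝ)..t, w s)) :
    ∀ α : ℝ, A < α →
      ∫ t in (0 : ℝ)..T, Real.exp (-α * t) * u t
        ≤ (A / (α - A)) * ∫ t in (0 : ℝ)..T, Real.exp (-α * t) * w t := by
  intro α hαA
  have hα : 0 < α := lt_of_le_of_lt hA hαA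
  have hrw : ∀ v : ℝ → ℝ, ∫ t in (0:ℝ)..T, Real.exp (-α * t) * v t
      = ∫ t in Icc (0:ℝ) T, Real.exp (-α * t) * v t := by
    intro v
    rw [intervalIntegral.integral_of_le hT.le, integral_Icc_eq_integral_Ioc]
  rw [hrw u, hrw w]
  set Eu := ∫ t in Icc (0:ℝ) T, Real.exp (-α * t) * u t with hEu
  set Ew := ∫ t in Icc (0:ℝ) T, Real.exp (-α * t) * w t with hEw
  -- continuity of primitives
  have hUc : ContinuousOn (fun t => ∫ s in (0:ℝ)..t, u s) (Icc (0:ℝ) T) := by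
    refine (intervalIntegral.continuousOn_primitive hu_int).congr ?_
    intro t ht
    exact intervalIntegral.integral_of_le ht.1
  have hWc : ContinuousOn (fun t => ∫ s in (0:ℝ)..t, w s) (Icc (0:ℝ) T) := by
    refine (intervalIntegral.continuousOn_primitive hw_int).congr ?_
    intro t ht
    exact intervalIntegral.integral_of_le ht.1
  have hexpc : Continuous (fun t : ℝ => Real.exp (-α * t)) :=
    Real.continuous_exp.comp (continuous_const.mul continuous_id)
  have hUI : IntegrableOn (fun t => Real.exp (-α * t) * ∫ s in (0:ℝ)..t, u s) (Icc (0:ℝ) T) :=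
    (hexpc.continuousOn.mul hUc).integrableOn_compact isCompact_Icc
  have hWI : IntegrableOn (fun t => Real.exp (-α * t) * ∫ s in (0:ℝ)..t, w s) (Icc (0:ℝ) T) :=
    (hexpc.continuousOn.mul hWc).integrableOn_compact isCompact_Icc
  have step1 : Eu ≤ ∫ t in Icc (0:ℝ) T,
      (A * (Real.exp (-α * t) * ∫ s in (0:ℝ)..t, u s)
        + A * (Real.exp (-α * t) * ∫ s in (0:ℝ)..t, w s)) := by
    refine MeasureTheory.setIntegral_mono_on (exp_mul_integrableOn hα hu_int)
      ((hUI.const_mul A).add (hWI.const_mul A)) measurableSet_Icc ?_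
    intro t ht
    have h1 := hineq t ht
    have h2 := mul_le_mul_of_nonneg_left h1 (Real.exp_pos (-α * t)).le
    calc Real.exp (-α * t) * u t
        ≤ Real.exp (-α * t) * (A * ((∫ s in (0:ℝ)..t, u s) + ∫ s in (0:ℝ)..t, w s)) := h2
      _ = A * (Real.exp (-α * t) * ∫ s in (0:ℝ)..t, u s)
          + A * (Real.exp (-α * t) * ∫ s in (0:ℝ)..t, w s) := by ring
  have step2 : ∫ t in Icc (0:ℝ) T,
      (A * (Real.exp (-α * t) * ∫ s in (0:ℝ)..t, u s)
        + A * (Real.exp (-α * t) * ∫ s in (0:ℝ)..t, w s))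
      = A * (∫ t in Icc (0:ℝ) T, Real.exp (-α * t) * ∫ s in (0:ℝ)..t, u s)
        + A * (∫ t in Icc (0:ℝ) T, Real.exp (-α * t) * ∫ s in (0:ℝ)..t, w s) := by
    rw [MeasureTheory.integral_add (hUI.const_mul A) (hWI.const_mul A),
      MeasureTheory.integral_const_mul, MeasureTheory.integral_const_mul]
  have hku := key_interchange hα u hu_int hu_nonneg
  have hkw := key_interchange hα w hw_int hw_nonneg
  have step3 : Eu ≤ A * (α⁻¹ * Eu) + A * (α⁻¹ * Ew) := by
    refine (step1.trans_eq step2).trans ?_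
    have h1 := mul_le_mul_of_nonneg_left hku hA
    have h2 := mul_le_mul_of_nonneg_left hkw hA
    linarith
  have hαA' : 0 < α - A := by linarith
  rw [div_mul_eq_mul_div, le_div_iff₀ hαA']
  have h4 : α * Eu ≤ A * Eu + A * Ew := by
    have := mul_le_mul_of_nonneg_left step3 hα.le
    calc α * Eu ≤ α * (A * (α⁻¹ * Eu) + A * (α⁻¹ * Ew)) := this
      _ = A * Eu + A * Ew := by field_simp
  nlinarith
end
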